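/- For every δ ∈ ℂ and 1 ≤ k ≤ N−1, the normalized GMRES residuals satisfy the updating formula w_k(δ) = s_k(δ)·w_{k−1}(δ) + (−1)^k·conj(c_k(δ))·v_{k+1}. -/

import Mathlib

open Polynomial Matrix Finset

/-- The standard inner product `x^* y` on `ℂ^n` (conjugate-linear in the first slot). -/
noncomputable def inn {n : ℕ} (x y : Fin n → ℂ) : ℂ := ∑ i, (starRingEnd ℂ) (x i) * y i

/-- The Euclidean norm on `ℂ^n`. -/
noncomputable def nrm {n : ℕ} (x : Fin n → ℂ) : ℝ := Real.sqrt (inn x x).re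

/-- `σ_k(δ) = sqrt(Σ_{j=0}^k |q_j(δ)|²)`. -/
noncomputable def sigmaP (q : ℕ → Polynomial ℂ) (δ : ℂ) (k : ℕ) : ℝ :=
  Real.sqrt (∑ j ∈ Finset.range (k + 1), ‖(q j).eval δ‖ ^ 2)

section InnLemmas

variable {n : ℕ}

lemma inn_add_left (x y z : Fin n → ℂ) : inn (x + y) z = inn x z + inn y z := by
  simp [inn, add_mul, Finset.sum_add_distrib]

lemma inn_sub_left (x y z : Fin n → ℂ) : inn (x - y) z = inn x z - inn y z := by
  simp [inn, sub_mul, Finset.sum_sub_distrib]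

lemma inn_sub_right (x y z : Fin n → ℂ) : inn x (y - z) = inn x y - inn x z := by
  simp [inn, mul_sub, Finset.sum_sub_distrib]

lemma inn_add_right (x y z : Fin n → ℂ) : inn x (y + z) = inn x y + inn x z := by
  simp [inn, mul_add, Finset.sum_add_distrib]

lemma inn_smul_left (c : ℂ) (x y : Fin n → ℂ) :
    inn (c • x) y = (starRingEnd ℂ) c * inn x y := by
  simp only [inn, Pi.smul_apply, smul_eq_mul, _root_.map_mul, Finset.mul_sum]
  exact Finset.sum_congr rfl fun i _ => by ring

lemma inn_smul_right (c : ℂ) (x y : Fin n → ℂ) : inn x (c • y) = c * inn x y := by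
  simp only [inn, Pi.smul_apply, smul_eq_mul, Finset.mul_sum]
  exact Finset.sum_congr rfl fun i _ => by ring

lemma inn_zero_left (y : Fin n → ℂ) : inn 0 y = 0 := by simp [inn]

lemma inn_sum_left {ι : Type*} (s : Finset ι) (f : ι → Fin n → ℂ) (y : Fin n → ℂ) :
    inn (∑ j ∈ s, f j) y = ∑ j ∈ s, inn (f j) y := by
  simp only [inn, Finset.sum_apply, map_sum, Finset.sum_mul]
  exact Finset.sum_comm

lemma inn_sum_right {ι : Type*} (s : Finset ι) (f : ι → Fin n → ℂ) (x : Fin n → ℂ) :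
    inn x (∑ j ∈ s, f j) = ∑ j ∈ s, inn x (f j) := by
  simp only [inn, Finset.sum_apply, Finset.mul_sum]
  exact Finset.sum_comm

lemma inn_conj (x y : Fin n → ℂ) : (starRingEnd ℂ) (inn x y) = inn y x := by
  simp only [inn, map_sum, _root_.map_mul, Complex.conj_conj]
  exact Finset.sum_congr rfl fun i _ => by ring

lemma inn_self_eq (x : Fin n → ℂ) : inn x x = ((∑ i, ‖x i‖ ^ 2 : ℝ) : ℂ) := by
  rw [inn, Complex.ofReal_sum]
  refine Finset.sum_congr rfl fun i _ => ?_
  rw [mul_comm, Complex.mul_conj]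
  norm_cast
  exact (Complex.sq_norm _).symm

lemma inn_self_zero {x : Fin n → ℂ} (h : inn x x = 0) : x = 0 := by
  rw [inn_self_eq] at h
  norm_cast at h
  funext i
  have hi := (Finset.sum_eq_zero_iff_of_nonneg (fun i _ => sq_nonneg _)).mp h i (Finset.mem_univ i)
  have h2 : ‖x i‖ = 0 := (pow_eq_zero_iff (by norm_num : (2:ℕ) ≠ 0)).mp hi
  simpa using h2

lemma nrm_eq_sqrt (x : Fin n → ℂ) (t : ℝ) (h : inn x x = (t : ℂ)) :
    nrm x = Real.sqrt t := by
  rw [nrm, h, Complex.ofReal_re]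

lemma nrm_pos {x : Fin n → ℂ} (hx : x ≠ 0) : 0 < nrm x := by
  rw [nrm_eq_sqrt x _ (inn_self_eq x)]
  apply Real.sqrt_pos.mpr
  obtain ⟨i, hi⟩ : ∃ i, x i ≠ 0 := by
    by_contra hc; push_neg at hc; exact hx (funext hc)
  exact Finset.sum_pos' (fun j _ => sq_nonneg _)
    ⟨i, Finset.mem_univ i, pow_pos (norm_pos_iff.mpr hi) 2⟩

end InnLemmas

/-- The normalized GMRES residuals satisfy the updating formula
`w_k(δ) = s_k(δ) w_{k-1}(δ) + (-1)^k conj(c_k(δ)) v_{k+1}`, where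
`s_k(δ) = σ_{k-1}(δ)/σ_k(δ)` and `c_k(δ) = (-1)^k q_k(δ)/σ_k(δ)`
(`0`-based: `v_{k+1}` is `v k`). -/
theorem stmt9 (n N : ℕ) (hN : 1 ≤ N) (hNn : N ≤ n)
    (A : Matrix (Fin n) (Fin n) ℂ) (b : Fin n → ℂ) (hb : b ≠ 0)
    (v : ℕ → Fin n → ℂ)
    (horth : ∀ i j : ℕ, i < N → j < N → inn (v i) (v j) = if i = j then 1 else 0)
    (hv1 : v 0 = (((nrm b)⁻¹ : ℝ) : ℂ) • b)
    (H : Matrix (Fin N) (Fin N) ℂ)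
    (hHess : ∀ i j : Fin N, (j : ℕ) + 1 < (i : ℕ) → H i j = 0)
    (hsub : ∀ (k : ℕ) (hk : k + 1 < N),
      0 < (H ⟨k + 1, hk⟩ ⟨k, Nat.lt_of_succ_lt hk⟩).re ∧
        (H ⟨k + 1, hk⟩ ⟨k, Nat.lt_of_succ_lt hk⟩).im = 0)
    (harn : ∀ (k : ℕ) (hk : k + 1 < N),
      A.mulVec (v k) = ∑ j : Fin (k + 2),
        H ⟨(j : ℕ), Nat.lt_of_le_of_lt (Nat.lt_succ_iff.mp j.isLt) hk⟩
          ⟨k, Nat.lt_of_succ_lt hk⟩ • v (j : ℕ))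
    (harnN : A.mulVec (v (N - 1)) =
      ∑ j : Fin N, H j ⟨N - 1, Nat.sub_lt hN Nat.one_pos⟩ • v (j : ℕ))
    (q : ℕ → Polynomial ℂ) (hq0 : q 0 = 1)
    (hqrec : ∀ (k : ℕ) (hk : k + 1 < N),
      Polynomial.C (H ⟨k + 1, hk⟩ ⟨k, Nat.lt_of_succ_lt hk⟩) * q (k + 1) =
        Polynomial.X * q k -
          ∑ j : Fin (k + 1),
            Polynomial.C (H ⟨(j : ℕ), Nat.lt_trans j.isLt hk⟩ ⟨k, Nat.lt_of_succ_lt hk⟩) *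
              q (j : ℕ))
    (u : ℂ → ℕ → Fin n → ℂ)
    (humem : ∀ (δ : ℂ) (k : ℕ), k < N →
      u δ k ∈ Submodule.span ℂ {x : Fin n → ℂ | ∃ j < k, x = (A - δ • 1).mulVec (v j)})
    (huperp : ∀ (δ : ℂ) (k : ℕ), k < N →
      ∀ y ∈ Submodule.span ℂ {x : Fin n → ℂ | ∃ j < k, x = (A - δ • 1).mulVec (v j)},
        inn y (b - u δ k) = 0)
    (r : ℂ → ℕ → Fin n → ℂ) (hr : ∀ δ k, r δ k = b - u δ k)
    (hrne : ∀ (δ : ℂ) (k : ℕ), k < N → r δ k ≠ 0)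
    (w : ℂ → ℕ → Fin n → ℂ) (hw : ∀ δ k, w δ k = (((nrm (r δ k))⁻¹ : ℝ) : ℂ) • r δ k)
 :
    ∀ (δ : ℂ) (k : ℕ), 1 ≤ k → k < N →
      w δ k = ((sigmaP q δ (k - 1) / sigmaP q δ k : ℝ) : ℂ) • w δ (k - 1) +
        ((-1 : ℂ) ^ k *
          (starRingEnd ℂ) ((-1 : ℂ) ^ k * (q k).eval δ / (sigmaP q δ k : ℂ))) • v k := by
  intro δ k hk1 hkN
  classical
  -- basic positivity facts
  have hσsq : ∀ m : ℕ, sigmaP q δ m ^ 2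
      = ∑ j ∈ Finset.range (m+1), ‖(q j).eval δ‖ ^ 2 := by
    intro m
    rw [sigmaP, Real.sq_sqrt (Finset.sum_nonneg fun j _ => sq_nonneg _)]
  have hσpos : ∀ m : ℕ, 0 < sigmaP q δ m := by
    intro m
    rw [sigmaP]
    apply Real.sqrt_pos.mpr
    refine Finset.sum_pos' (fun j _ => sq_nonneg _)
      ⟨0, Finset.mem_range.mpr (Nat.succ_pos m), ?_⟩
    norm_num [hq0]
  have hbpos : 0 < nrm b := nrm_pos hb
  have hbv : b = ((nrm b : ℝ) : ℂ) • v 0 := by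
    rw [hv1, smul_smul, ← Complex.ofReal_mul, mul_inv_cancel₀ (ne_of_gt hbpos),
      Complex.ofReal_one, one_smul]
  -- total function version of H
  set Hc : ℕ → ℕ → ℂ := fun j i => if h : j < N ∧ i < N then H ⟨j, h.1⟩ ⟨i, h.2⟩ else 0
    with hHcdef
  have hHc : ∀ (j i : ℕ) (hj : j < N) (hi : i < N), Hc j i = H ⟨j, hj⟩ ⟨i, hi⟩ := by
    intro j i hj hi
    simp only [hHcdef]
    exact dif_pos ⟨hj, hi⟩
  have hHne : ∀ (i : ℕ), i + 1 < N → Hc (i+1) i ≠ 0 := by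
    intro i hi h0
    have h3 : H ⟨i+1, hi⟩ ⟨i, Nat.lt_of_succ_lt hi⟩ = 0 := by
      rw [← hHc (i+1) i hi (Nat.lt_of_succ_lt hi)]; exact h0
    have h4 := (hsub i hi).1
    rw [h3] at h4
    simp at h4
  -- Arnoldi relation in `range` form
  have hg : ∀ (i : ℕ), i + 1 < N →
      (A - δ • 1).mulVec (v i)
        = (∑ j ∈ Finset.range (i+1+1), Hc j i • v j) - δ • v i := by
    intro i hi
    rw [Matrix.sub_mulVec, Matrix.smul_mulVec, Matrix.one_mulVec, harn i hi]
    congr 1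
    rw [Finset.sum_range (fun j => Hc j i • v j)]
    refine Finset.sum_congr rfl fun j _ => ?_
    rw [hHc (j : ℕ) i (Nat.lt_of_le_of_lt (Nat.lt_succ_iff.mp j.isLt) hi) (Nat.lt_of_succ_lt hi)]
  -- recurrence, evaluated at δ
  have hQrec : ∀ (i : ℕ), i + 1 < N →
      Hc (i+1) i * (q (i+1)).eval δ
        = δ * (q i).eval δ - ∑ j ∈ Finset.range (i+1), Hc j i * (q j).eval δ := by
    intro i hi
    have h := congrArg (Polynomial.eval δ) (hqrec i hi)
    simp only [Polynomial.eval_mul, Polynomial.eval_C, Polynomial.eval_X, Polynomial.eval_sub,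
      Polynomial.eval_finset_sum] at h
    rw [hHc (i+1) i hi (Nat.lt_of_succ_lt hi), h]
    congr 1
    rw [Finset.sum_range (fun j => Hc j i * (q j).eval δ)]
    refine Finset.sum_congr rfl fun j _ => ?_
    rw [hHc (j : ℕ) i (Nat.lt_trans j.isLt hi) (Nat.lt_of_succ_lt hi)]
  -- the candidate residual directions
  set T : ℕ → Fin n → ℂ :=
    fun m => ∑ j ∈ Finset.range (m+1), (starRingEnd ℂ) ((q j).eval δ) • v j with hTdef
  have hTm : ∀ m : ℕ,
      T m = ∑ j ∈ Finset.range (m+1), (starRingEnd ℂ) ((q j).eval δ) • v j := fun m => rfl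
  have hvT : ∀ (j0 m : ℕ), j0 < N → m < N →
      inn (v j0) (T m) = if j0 ≤ m then (starRingEnd ℂ) ((q j0).eval δ) else 0 := by
    intro j0 m hj0 hm
    rw [hTm m, inn_sum_right]
    have h1 : ∀ j ∈ Finset.range (m+1),
        inn (v j0) ((starRingEnd ℂ) ((q j).eval δ) • v j)
          = if j0 = j then (starRingEnd ℂ) ((q j).eval δ) else 0 := by
      intro j hj
      rw [inn_smul_right,
        horth j0 j hj0 (lt_of_lt_of_le (Finset.mem_range.mp hj) (Nat.succ_le_of_lt hm))]
      simp only [mul_ite, mul_one, mul_zero]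
    rw [Finset.sum_congr rfl h1, Finset.sum_ite_eq]
    simp [Nat.lt_succ_iff]
  have hTT : ∀ m : ℕ, m < N → inn (T m) (T m) = ((sigmaP q δ m ^ 2 : ℝ) : ℂ) := by
    intro m hm
    have h1 : ∀ j ∈ Finset.range (m+1),
        inn ((starRingEnd ℂ) ((q j).eval δ) • v j) (T m)
          = ((‖(q j).eval δ‖ ^ 2 : ℝ) : ℂ) := by
      intro j hj
      have hjm : j ≤ m := Nat.lt_succ_iff.mp (Finset.mem_range.mp hj)
      rw [inn_smul_left, hvT j m (lt_of_le_of_lt hjm hm) hm, if_pos hjm, Complex.conj_conj,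
        Complex.mul_conj]
      norm_cast
      exact (Complex.sq_norm _).symm
    calc inn (T m) (T m)
        = ∑ j ∈ Finset.range (m+1), inn ((starRingEnd ℂ) ((q j).eval δ) • v j) (T m) := by
          nth_rewrite 1 [hTm m]
          exact inn_sum_left _ _ _
      _ = ∑ j ∈ Finset.range (m+1), ((‖(q j).eval δ‖ ^ 2 : ℝ) : ℂ) :=
          Finset.sum_congr rfl h1
      _ = ((sigmaP q δ m ^ 2 : ℝ) : ℂ) := by
          rw [hσsq m]; norm_cast
  -- the generating vectors are orthogonal to T m
  have hgT : ∀ (m i : ℕ), m < N → i < m → inn ((A - δ • 1).mulVec (v i)) (T m) = 0 := by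
    intro m i hm him
    have hiN : i + 1 < N := Nat.lt_of_le_of_lt (Nat.succ_le_of_lt him) hm
    rw [hg i hiN, inn_sub_left, inn_sum_left]
    have h1 : ∀ j ∈ Finset.range (i+1+1), inn (Hc j i • v j) (T m)
        = (starRingEnd ℂ) (Hc j i * (q j).eval δ) := by
      intro j hj
      have hji : j ≤ i + 1 := Nat.lt_succ_iff.mp (Finset.mem_range.mp hj)
      have hjm : j ≤ m := le_trans hji (Nat.succ_le_of_lt him)
      rw [inn_smul_left, hvT j m (lt_of_le_of_lt hjm hm) hm, if_pos hjm, _root_.map_mul]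
    rw [Finset.sum_congr rfl h1, inn_smul_left, hvT i m (lt_trans him hm) hm,
      if_pos (le_of_lt him), ← map_sum, ← _root_.map_mul, ← _root_.map_sub]
    have hz : (∑ j ∈ Finset.range (i+1+1), Hc j i * (q j).eval δ) - δ * (q i).eval δ = 0 := by
      rw [Finset.sum_range_succ, hQrec i hiN]
      ring
    rw [hz, map_zero]
  -- everything in the Krylov space is orthogonal to T m
  have hST : ∀ (m : ℕ), m < N → ∀ z ∈ Submodule.span ℂ
      {x : Fin n → ℂ | ∃ j < m, x = (A - δ • 1).mulVec (v j)}, inn z (T m) = 0 := by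
    intro m hm z hz
    induction hz using Submodule.span_induction with
    | mem x hx => obtain ⟨j, hj, rfl⟩ := hx; exact hgT m j hm hj
    | zero => exact inn_zero_left _
    | add x y _ _ hx hy => rw [inn_add_left, hx, hy, add_zero]
    | smul a x _ hx => rw [inn_smul_left, hx, mul_zero]
  -- each v j lies in (Krylov space) + ℂ v 0
  have hmem : ∀ (m : ℕ), m < N → ∀ (j : ℕ), j ≤ m →
      v j ∈ Submodule.span ℂ {x : Fin n → ℂ | ∃ l < m, x = (A - δ • 1).mulVec (v l)}
        ⊔ Submodule.span ℂ {v 0} := by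
    intro m hm j
    induction j using Nat.strong_induction_on with
    | _ j ih =>
      intro hjm
      cases j with
      | zero => exact Submodule.mem_sup_right (Submodule.mem_span_singleton_self _)
      | succ i =>
        have him : i < m := Nat.lt_of_succ_le hjm
        have hiN : i + 1 < N := Nat.lt_of_le_of_lt hjm hm
        have hv1i : v (i+1) = (Hc (i+1) i)⁻¹ •
            ((A - δ • 1).mulVec (v i)
              - ((∑ l ∈ Finset.range (i+1), Hc l i • v l) - δ • v i)) := by
          rw [hg i hiN, Finset.sum_range_succ]
          rw [show (∑ l ∈ Finset.range (i+1), Hc l i • v l) + Hc (i+1) i • v (i+1) - δ • v i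
              - ((∑ l ∈ Finset.range (i+1), Hc l i • v l) - δ • v i)
              = Hc (i+1) i • v (i+1) by abel]
          rw [smul_smul, inv_mul_cancel₀ (hHne i hiN), one_smul]
        rw [hv1i]
        refine Submodule.smul_mem _ _ (Submodule.sub_mem _
          (Submodule.mem_sup_left (Submodule.subset_span ⟨i, him, rfl⟩))
          (Submodule.sub_mem _ ?_ ?_))
        · exact Submodule.sum_mem _ fun l hl => Submodule.smul_mem _ _
            (ih l (Finset.mem_range.mp hl)
              (le_trans (Nat.lt_succ_iff.mp (Finset.mem_range.mp hl)) (le_of_lt him)))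
        · exact Submodule.smul_mem _ _ (ih i (Nat.lt_succ_self i) (le_of_lt him))
  -- the key closed formula for the residual
  have key : ∀ (m : ℕ), m < N →
      r δ m = ((nrm b / sigmaP q δ m ^ 2 : ℝ) : ℂ) • T m := by
    intro m hm
    have hTv0 : inn (T m) (v 0) = 1 := by
      rw [← inn_conj, hvT 0 m (Nat.lt_of_lt_of_le Nat.zero_lt_one hN) hm,
        if_pos (Nat.zero_le m)]
      simp [hq0]
    have hTb : inn (T m) b = ((nrm b : ℝ) : ℂ) := by
      conv_lhs => rw [hbv]
      rw [inn_smul_right, hTv0, mul_one]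
    have hTbm : inn (T m) (b - ((nrm b / sigmaP q δ m ^ 2 : ℝ) : ℂ) • T m) = 0 := by
      rw [inn_sub_right, inn_smul_right, hTT m hm, hTb, ← Complex.ofReal_mul,
        div_mul_cancel₀ _ (pow_ne_zero 2 (ne_of_gt (hσpos m))), sub_self]
    have hbT : b - ((nrm b / sigmaP q δ m ^ 2 : ℝ) : ℂ) • T m
        ∈ Submodule.span ℂ {x : Fin n → ℂ | ∃ l < m, x = (A - δ • 1).mulVec (v l)}
          ⊔ Submodule.span ℂ {v 0} := by
      refine Submodule.sub_mem _ ?_ (Submodule.smul_mem _ _ ?_)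
      · rw [hbv]
        exact Submodule.smul_mem _ _ (hmem m hm 0 (Nat.zero_le m))
      · rw [hTm m]
        exact Submodule.sum_mem _ fun j hj => Submodule.smul_mem _ _
          (hmem m hm j (Nat.lt_succ_iff.mp (Finset.mem_range.mp hj)))
    obtain ⟨s, hs, t, ht, hst⟩ := Submodule.mem_sup.mp hbT
    obtain ⟨α, rfl⟩ := Submodule.mem_span_singleton.mp ht
    have hTs : inn (T m) s = 0 := by
      rw [← inn_conj, hST m hm s hs, map_zero]
    have hα : α = 0 := by
      have h0 := hTbm
      rw [← hst, inn_add_right, hTs, inn_smul_right, hTv0, mul_one, zero_add] at h0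
      exact h0
    have hbS : b - ((nrm b / sigmaP q δ m ^ 2 : ℝ) : ℂ) • T m
        ∈ Submodule.span ℂ {x : Fin n → ℂ | ∃ l < m, x = (A - δ • 1).mulVec (v l)} := by
      rw [← hst, hα]
      simpa using hs
    have hrS : r δ m - ((nrm b / sigmaP q δ m ^ 2 : ℝ) : ℂ) • T m
        ∈ Submodule.span ℂ {x : Fin n → ℂ | ∃ l < m, x = (A - δ • 1).mulVec (v l)} := by
      rw [hr, sub_right_comm]
      exact Submodule.sub_mem _ hbS (humem δ m hm)
    have h1 : ∀ z ∈ Submodule.span ℂ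
        {x : Fin n → ℂ | ∃ l < m, x = (A - δ • 1).mulVec (v l)},
        inn z (r δ m - ((nrm b / sigmaP q δ m ^ 2 : ℝ) : ℂ) • T m) = 0 := by
      intro z hz
      rw [inn_sub_right, inn_smul_right, hST m hm z hz, mul_zero, sub_zero, hr]
      exact huperp δ m hm z hz
    have hzero : r δ m - ((nrm b / sigmaP q δ m ^ 2 : ℝ) : ℂ) • T m = 0 :=
      inn_self_zero (h1 _ hrS)
    exact sub_eq_zero.mp hzero
  -- norm of the residual
  have hrnorm : ∀ m : ℕ, m < N → nrm (r δ m) = nrm b / sigmaP q δ m := by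
    intro m hm
    have hσ : sigmaP q δ m ≠ 0 := ne_of_gt (hσpos m)
    have h1 : inn (r δ m) (r δ m) = (((nrm b / sigmaP q δ m) ^ 2 : ℝ) : ℂ) := by
      rw [key m hm, inn_smul_left, inn_smul_right, hTT m hm, Complex.conj_ofReal]
      norm_cast
      field_simp
    rw [nrm_eq_sqrt _ _ h1, Real.sqrt_sq (le_of_lt (div_pos hbpos (hσpos m)))]
  -- the normalized residual
  have hwT : ∀ m : ℕ, m < N →
      w δ m = (((sigmaP q δ m)⁻¹ : ℝ) : ℂ) • T m := by
    intro m hm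
    have hσ : sigmaP q δ m ≠ 0 := ne_of_gt (hσpos m)
    have hbne : nrm b ≠ 0 := ne_of_gt hbpos
    rw [hw, hrnorm m hm, key m hm, smul_smul, ← Complex.ofReal_mul]
    congr 1
    rw [Complex.ofReal_inj]
    field_simp
  -- finish
  obtain ⟨k', rfl⟩ : ∃ k', k = k' + 1 := ⟨k - 1, (Nat.succ_pred_eq_of_pos hk1).symm⟩
  have hk'N : k' < N := Nat.lt_of_succ_lt hkN
  have hsplit : T (k' + 1) = T k' + (starRingEnd ℂ) ((q (k'+1)).eval δ) • v (k'+1) := by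
    rw [hTm (k'+1), hTm k', Finset.sum_range_succ]
  rw [hwT (k'+1) hkN, hsplit, smul_add]
  simp only [Nat.add_sub_cancel]
  rw [hwT k' hk'N, smul_smul, smul_smul]
  congr 1
  · congr 1
    have h1 : sigmaP q δ k' ≠ 0 := ne_of_gt (hσpos k')
    have h2 : sigmaP q δ (k'+1) ≠ 0 := ne_of_gt (hσpos (k'+1))
    rw [← Complex.ofReal_mul, Complex.ofReal_inj]
    field_simp
  · congr 1
    rw [map_div₀, _root_.map_mul, _root_.map_pow, _root_.map_neg, _root_.map_one, Complex.conj_ofReal,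
      ← mul_div_assoc, ← mul_assoc, ← mul_pow, neg_mul_neg, one_mul, one_pow, one_mul,
      Complex.ofReal_inv, inv_mul_eq_div]
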